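/- Let E be a quantum channel on M_d(ℂ) whose peripheral spectrum consists of the p-th roots of unity exp(2πik/p), each nondegenerate, with cyclic projections Π_0,…,Π_{p−1} summing to 1 such that the adjoint satisfies E†-action |Π_k⟩ ↦ |Π_{k−1}⟩ and with unique invariant state σ = Σ_k Π_k σ Π_k satisfying E(Π_k σ Π_k) = Π_{k+1} σ Π_{k+1} and tr(Π_k σ Π_k) = 1/p. Then the peripheral part Ẽ of E (Definition: Ẽ = spectral projection onto modulus-1 eigenvalues composed with E) is given explicitly by Ẽ(X) = p Σ_k tr(Π_k X Π_k) Π_{k+1} σ Π_{k+1} (indices mod p). -/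

import Mathlib

open Matrix
open scoped ComplexOrder

/-- The root of unity `exp(2πi r / p)` indexed by `r : ZMod p`. -/
noncomputable def rootOfUnity' (p : ℕ) (r : ZMod p) : ℂ :=
  Complex.exp (2 * (Real.pi : ℂ) * Complex.I * (r.val : ℂ) / (p : ℂ))

/-- The tensor extension `id_T ⊗ M` of a map on `D × D` matrices. -/
def idTensorSq {T D : Type*} (M : Matrix D D ℂ → Matrix D D ℂ)
    (X : Matrix (T × D) (T × D) ℂ) : Matrix (T × D) (T × D) ℂ :=
  fun p q => M (fun x y => X (p.1, x) (q.1, y)) p.2 q.2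

noncomputable def zeta (p : ℕ) : ℂ := Complex.exp (2 * Real.pi * Complex.I / p)

lemma zeta_prim (p : ℕ) [NeZero p] : IsPrimitiveRoot (zeta p) p := by
  simpa [zeta, mul_comm] using Complex.isPrimitiveRoot_exp p (NeZero.ne p)

lemma root_eq_pow (p : ℕ) [NeZero p] (r : ZMod p) : rootOfUnity' p r = zeta p ^ r.val := by
  rw [zeta, ← Complex.exp_nat_mul, rootOfUnity']
  ring_nf

lemma root_natCast (p : ℕ) [NeZero p] (n : ℕ) : rootOfUnity' p (n : ZMod p) = zeta p ^ n := by
  rw [root_eq_pow, ZMod.val_natCast]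
  conv_rhs => rw [← Nat.mod_add_div n p, pow_add, pow_mul, (zeta_prim p).pow_eq_one, one_pow, mul_one]

lemma root_add (p : ℕ) [NeZero p] (a b : ZMod p) :
    rootOfUnity' p (a + b) = rootOfUnity' p a * rootOfUnity' p b := by
  have : ((a.val + b.val : ℕ) : ZMod p) = a + b := by push_cast [ZMod.natCast_val, ZMod.cast_id]; ring
  rw [← this, root_natCast, pow_add, root_eq_pow, root_eq_pow]

lemma root_zero (p : ℕ) [NeZero p] : rootOfUnity' p 0 = 1 := by
  simp [rootOfUnity', ZMod.val_zero]

lemma root_inj (p : ℕ) [NeZero p] {a b : ZMod p} (h : rootOfUnity' p a = rootOfUnity' p b) : a = b := by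
  rw [root_eq_pow, root_eq_pow] at h
  have := (zeta_prim p).pow_inj a.val_lt b.val_lt h
  exact ZMod.val_injective p this

lemma root_conj (p : ℕ) [NeZero p] (a : ZMod p) :
    (starRingEnd ℂ) (rootOfUnity' p a) = rootOfUnity' p (-a) := by
  have h1 : rootOfUnity' p a * rootOfUnity' p (-a) = 1 := by
    rw [← root_add, add_neg_cancel, root_zero]
  have h2 : (starRingEnd ℂ) (rootOfUnity' p a) * rootOfUnity' p a = 1 := by
    rw [rootOfUnity', ← Complex.exp_conj, ← Complex.exp_add]
    rw [show (starRingEnd ℂ) (2 * (Real.pi:ℂ) * Complex.I * (a.val : ℂ) / p) = -(2 * (Real.pi:ℂ) * Complex.I * (a.val : ℂ) / p) by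
      simp only [map_div₀, _root_.map_mul, Complex.conj_I, Complex.conj_natCast, Complex.conj_ofReal, map_ofNat]; ring]
    simp
  calc (starRingEnd ℂ) (rootOfUnity' p a)
      = (starRingEnd ℂ) (rootOfUnity' p a) * (rootOfUnity' p a * rootOfUnity' p (-a)) := by rw [h1, mul_one]
    _ = rootOfUnity' p (-a) := by rw [← mul_assoc, h2, one_mul]

lemma root_star (p : ℕ) [NeZero p] (a : ZMod p) :
    star (rootOfUnity' p a) = rootOfUnity' p (-a) := root_conj p a

lemma root_mul_root_neg (p : ℕ) [NeZero p] (a : ZMod p) :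
    rootOfUnity' p a * rootOfUnity' p (-a) = 1 := by
  rw [← root_add, add_neg_cancel, root_zero]

lemma root_abs (p : ℕ) [NeZero p] (a : ZMod p) : ‖rootOfUnity' p a‖ = 1 := by
  have h : Complex.normSq (rootOfUnity' p a) = 1 := by
    have := root_mul_root_neg p a
    rw [← root_conj, Complex.mul_conj] at this
    exact_mod_cast this
  rw [Complex.norm_def, h, Real.sqrt_one]

lemma root_sum (p : ℕ) [NeZero p] (m : ZMod p) :
    ∑ r : ZMod p, rootOfUnity' p (r * m) = if m = 0 then (p : ℂ) else 0 := by
  have key : ∀ r : ZMod p, rootOfUnity' p (r * m) = (zeta p ^ m.val) ^ r.val := by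
    intro r
    have : ((r.val * m.val : ℕ) : ZMod p) = r * m := by push_cast [ZMod.natCast_val, ZMod.cast_id]; ring
    rw [← this, root_natCast, pow_mul']
  simp_rw [key]
  rw [show ∑ r : ZMod p, (zeta p ^ m.val) ^ r.val = ∑ i ∈ Finset.range p, (zeta p ^ m.val) ^ i from
    Finset.sum_nbij' (fun r => r.val) (fun i => (i : ZMod p)) (by simp [ZMod.val_lt, Finset.mem_range]) (by simp) (by simp [ZMod.natCast_val, ZMod.cast_id]) (by intro i hi; simp [ZMod.val_natCast, Nat.mod_eq_of_lt (Finset.mem_range.1 hi)]) (fun _ _ => rfl)]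
  by_cases hm : m = 0
  · simp [hm, root_zero]
  · have hne : zeta p ^ m.val ≠ 1 := by
      intro h
      exact hm (ZMod.val_injective p (by simpa using (zeta_prim p).pow_inj m.val_lt (Nat.pos_of_ne_zero (NeZero.ne p)) (by simpa [ZMod.val_zero] using h)))
    rw [geom_sum_eq hne]
    rw [if_neg hm, div_eq_zero_iff]
    left
    rw [← pow_mul, mul_comm, pow_mul, (zeta_prim p).pow_eq_one, one_pow, sub_self]


/-- Let `E` be a quantum channel on `M_d(ℂ)` whose peripheral spectrum consists of the
nondegenerate `p`-th roots of unity, with cyclic orthogonal projections `Π_k` summing to `1`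
such that the adjoint maps `Π_k ↦ Π_{k−1}`, and with invariant state `σ = Σ_k Π_k σ Π_k`
satisfying `E(Π_k σ Π_k) = Π_{k+1} σ Π_{k+1}` and `tr(Π_k σ Π_k) = 1/p`.  Then the
peripheral part `Ẽ = Σ_r e^{−2πir/p} |v_r⟩⟨u_r|` of `E` is given explicitly by
`Ẽ(X) = p Σ_k tr(Π_k X Π_k) Π_{k+1} σ Π_{k+1}` (indices mod `p`). -/
theorem peripheral_part_of_cyclic_channel
    {D : Type*} [Fintype D] [DecidableEq D] (p : ℕ) [NeZero p]
    (E Et : Matrix D D ℂ →ₗ[ℂ] Matrix D D ℂ)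
    (hTP : ∀ X : Matrix D D ℂ, (E X).trace = X.trace)
    (hCP : ∀ (n : ℕ) (X : Matrix (Fin n × D) (Fin n × D) ℂ),
      X.PosSemidef → (idTensorSq (⇑E) X).PosSemidef)
    (Pj : ZMod p → Matrix D D ℂ)
    (hherm : ∀ k, (Pj k)ᴴ = Pj k)
    (hidem : ∀ k, Pj k * Pj k = Pj k)
    (horth : ∀ k l, k ≠ l → Pj k * Pj l = 0)
    (hone : ∑ k, Pj k = 1)
    (σ : Matrix D D ℂ) (hσ : σ.PosSemidef) (hσtr : σ.trace = 1)
    (hσfix : E σ = σ)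
    (hblock : σ = ∑ k, Pj k * σ * Pj k)
    (hcyc : ∀ k, E (Pj k * σ * Pj k) = Pj (k + 1) * σ * Pj (k + 1))
    (htrk : ∀ k, (Pj k * σ * Pj k).trace = 1 / (p : ℂ))
    (hadj : ∀ (k : ZMod p) (X : Matrix D D ℂ),
      (Pj k * E X).trace = (Pj (k - 1) * X).trace)
    (herg : ∀ X : Matrix D D ℂ, E X = X → ∃ z : ℂ, X = z • σ)
    -- the biorthogonal peripheral eigenvectors `v_r` of `E`
    (v : ZMod p → Matrix D D ℂ)
    (heigv : ∀ r, E (v r) = rootOfUnity' p (-r) • v r)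
    (hbio : ∀ r r',
      ((v r')ᴴ * (∑ k, rootOfUnity' p (r * k) • Pj k)).trace = if r = r' then 1 else 0)
    -- nondegeneracy of the peripheral spectrum
    (hperiph : ∀ (X : Matrix D D ℂ) (c : ℂ), X ≠ 0 → E X = c • X → ‖c‖ = 1 →
      ∃ (r : ZMod p) (z : ℂ), c = rootOfUnity' p (-r) ∧ X = z • v r)
    -- `Ẽ` is the peripheral part of `E`
    (hEt : ∀ X : Matrix D D ℂ,
      Et X = ∑ r : ZMod p,
        (rootOfUnity' p (-r) *
          (((∑ k, rootOfUnity' p (r * k) • Pj k)ᴴ * X).trace)) • v r) :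
    ∀ X : Matrix D D ℂ,
      Et X = (p : ℂ) • ∑ k : ZMod p,
        ((Pj k * X * Pj k).trace) • (Pj (k + 1) * σ * Pj (k + 1)) := by
  have hp : (p : ℂ) ≠ 0 := Nat.cast_ne_zero.mpr (NeZero.ne p)
  -- orthogonality of the blocks
  have htr_orth : ∀ k l : ZMod p, ((Pj k * σ * Pj k) * Pj l).trace
      = if k = l then 1 / (p : ℂ) else 0 := by
    intro k l
    by_cases h : k = l
    · subst h
      rw [if_pos rfl, mul_assoc, mul_assoc, hidem, ← mul_assoc, htrk]
    · rw [if_neg h, mul_assoc, mul_assoc, horth k l h, mul_zero, mul_zero, trace_zero]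
  -- the explicit eigenvectors
  set w : ZMod p → Matrix D D ℂ :=
    fun r => ∑ k, rootOfUnity' p (r * k) • (Pj k * σ * Pj k) with hw
  -- w r is nonzero
  have hw_ne : ∀ r, w r ≠ 0 := by
    intro r h
    have h0 : ((w r) * Pj 0).trace = 1 / (p : ℂ) := by
      rw [hw]
      simp only [Finset.sum_mul, trace_sum, smul_mul_assoc, trace_smul, htr_orth,
        smul_eq_mul]
      rw [Finset.sum_eq_single 0]
      · simp [root_zero]
      · intro b _ hb; rw [if_neg hb, mul_zero]
      · simp
    rw [h, zero_mul, trace_zero] at h0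
    exact (one_div_ne_zero hp) h0.symm
  -- E acts on w r with eigenvalue ω^{-r}
  have hEw : ∀ r, E (w r) = rootOfUnity' p (-r) • w r := by
    intro r
    rw [hw]
    simp only [map_sum, _root_.map_smul, hcyc]
    rw [Finset.smul_sum]
    exact Fintype.sum_equiv (Equiv.addRight (1 : ZMod p)) _ _ (by
      intro k
      simp only [Equiv.coe_addRight, smul_smul]
      congr 1
      rw [← root_add]
      congr 1
      ring)
  -- conjugate transposes
  have hwH : ∀ r, (w r)ᴴ = ∑ k, rootOfUnity' p (-(r * k)) • (Pj k * σ * Pj k) := by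
    intro r
    rw [hw]
    simp only [conjTranspose_sum, conjTranspose_smul, root_star, conjTranspose_mul,
      hherm, hσ.1.eq, mul_assoc]
  have hUH : ∀ r : ZMod p, (∑ k, rootOfUnity' p (r * k) • Pj k)ᴴ
      = ∑ k, rootOfUnity' p (-(r * k)) • Pj k := by
    intro r
    simp only [conjTranspose_sum, conjTranspose_smul, root_star, hherm]
  -- v r = w r
  have hveq : ∀ r, v r = w r := by
    intro r
    obtain ⟨r', z, hc, hz⟩ := hperiph (w r) _ (hw_ne r) (hEw r) (root_abs p (-r))
    have hrr : r = r' := by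
      have := root_inj p hc
      exact neg_injective this
    subst hrr
    -- compute tr((w r)ᴴ u r) = 1
    have h1 : ((w r)ᴴ * (∑ k, rootOfUnity' p (r * k) • Pj k)).trace = 1 := by
      rw [hwH]
      rw [Finset.sum_mul, trace_sum]
      have : ∀ k : ZMod p, ((rootOfUnity' p (-(r * k)) • (Pj k * σ * Pj k)) *
          (∑ l, rootOfUnity' p (r * l) • Pj l)).trace = 1 / (p : ℂ) := by
        intro k
        rw [Finset.mul_sum, trace_sum]
        rw [Finset.sum_eq_single k]
        · rw [smul_mul_smul_comm, trace_smul, htr_orth, if_pos rfl, smul_eq_mul,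
            mul_comm (rootOfUnity' p (-(r*k))), root_mul_root_neg, one_mul]
        · intro l _ hl
          rw [smul_mul_smul_comm, trace_smul, htr_orth, if_neg (Ne.symm hl), smul_zero]
        · simp
      simp only [this, Finset.sum_const, Finset.card_univ, ZMod.card, nsmul_eq_mul]
      field_simp
    have h2 : ((w r)ᴴ * (∑ k, rootOfUnity' p (r * k) • Pj k)).trace = star z := by
      rw [hz, conjTranspose_smul, smul_mul_assoc, trace_smul]
      have := hbio r r
      rw [if_pos rfl] at this
      rw [this, smul_eq_mul, mul_one]
    have hz1 : z = 1 := by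
      have : star z = 1 := by rw [← h2, h1]
      calc z = star (star z) := (star_star z).symm
        _ = 1 := by rw [this, star_one]
    rw [hz, hz1, one_smul]
  -- final computation
  intro X
  rw [hEt X]
  simp only [hveq, hUH]
  have step : ∀ r : ZMod p,
      (rootOfUnity' p (-r) * ((∑ k, rootOfUnity' p (-(r * k)) • Pj k) * X).trace) • w r
      = ∑ k, ∑ l, (rootOfUnity' p (r * (l - k - 1)) * (Pj k * X).trace)
          • (Pj l * σ * Pj l) := by
    intro r
    rw [Finset.sum_mul, trace_sum]
    simp only [smul_mul_assoc, trace_smul, smul_eq_mul]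
    rw [Finset.mul_sum, Finset.sum_smul]
    refine Finset.sum_congr rfl fun k _ => ?_
    rw [hw, Finset.smul_sum]
    refine Finset.sum_congr rfl fun l _ => ?_
    rw [smul_smul]
    congr 1
    rw [show rootOfUnity' p (-r) * (rootOfUnity' p (-(r * k)) * (Pj k * X).trace) *
        rootOfUnity' p (r * l)
      = rootOfUnity' p (-r) * rootOfUnity' p (-(r * k)) * rootOfUnity' p (r * l) *
        (Pj k * X).trace by ring, ← root_add, ← root_add]
    congr 2
    ring
  simp only [step]
  rw [Finset.sum_comm]
  calc ∑ k : ZMod p, ∑ r : ZMod p, ∑ l : ZMod p,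
        (rootOfUnity' p (r * (l - k - 1)) * (Pj k * X).trace) • (Pj l * σ * Pj l)
      = ∑ k : ZMod p, ∑ l : ZMod p,
        ((∑ r : ZMod p, rootOfUnity' p (r * (l - k - 1))) * (Pj k * X).trace)
          • (Pj l * σ * Pj l) := by
        refine Finset.sum_congr rfl fun k _ => ?_
        rw [Finset.sum_comm]
        refine Finset.sum_congr rfl fun l _ => ?_
        rw [Finset.sum_mul, Finset.sum_smul]
    _ = ∑ k : ZMod p, ((p : ℂ) * (Pj k * X).trace) • (Pj (k + 1) * σ * Pj (k + 1)) := by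
        refine Finset.sum_congr rfl fun k _ => ?_
        rw [Finset.sum_eq_single (k + 1)]
        · rw [root_sum, if_pos (by ring)]
        · intro l _ hl
          rw [root_sum, if_neg (fun h => hl (by rw [sub_sub] at h; exact sub_eq_zero.mp h)),
            zero_mul, zero_smul]
        · simp
    _ = (p : ℂ) • ∑ k : ZMod p, (Pj k * X * Pj k).trace • (Pj (k + 1) * σ * Pj (k + 1)) := by
        rw [Finset.smul_sum]
        refine Finset.sum_congr rfl fun k _ => ?_
        rw [smul_smul]
        congr 1
        rw [trace_mul_cycle, hidem]
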